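/- Let S ∈ (0,∞), β₁, β₂ ∈ (2/3, 1] and m(z) := z^{β₁}(S−z)^{β₂} for z ∈ (0,S). Then f(S) := ∫₀^S √(2/m(r)) dr is finite, lim_{z→0⁺} m'(z)² f(z) = 0, and lim_{z→S⁻} m'(z)² (f(S) − f(z)) = 0; that is, m satisfies condition (M-S). -/

import Mathlib

open MeasureTheory Set Filter Topology intervalIntegral

/-- Auxiliary: pointwise identity for the integrand. -/
lemma MS_sqrt_eq (S β₁ β₂ r : ℝ) (hr : 0 < r) (hSr : 0 < S - r) :
    Real.sqrt (2 / (r ^ β₁ * (S - r) ^ β₂))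
      = Real.sqrt 2 * r ^ (-(β₁ / 2)) * (S - r) ^ (-(β₂ / 2)) := by
  have e : 2 / (r ^ β₁ * (S - r) ^ β₂)
      = 2 * (r ^ (-(β₁ / 2)) * (S - r) ^ (-(β₂ / 2))) ^ 2 := by
    have e1 : (r ^ (-(β₁ / 2))) ^ 2 = r ^ (-β₁) := by
      rw [sq, ← Real.rpow_add hr]; ring_nf
    have e2 : ((S - r) ^ (-(β₂ / 2))) ^ 2 = (S - r) ^ (-β₂) := by
      rw [sq, ← Real.rpow_add hSr]; ring_nf
    rw [mul_pow, e1, e2, Real.rpow_neg hr.le, Real.rpow_neg hSr.le]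
    have h1 : r ^ β₁ ≠ 0 := (Real.rpow_pos_of_pos hr _).ne'
    have h2 : (S - r) ^ β₂ ≠ 0 := (Real.rpow_pos_of_pos hSr _).ne'
    field_simp
  rw [e, Real.sqrt_mul (by norm_num : (0:ℝ) ≤ 2), Real.sqrt_sq (by positivity), mul_assoc]

/-- Auxiliary: the derivative of the mobility. -/
lemma MS_deriv (S β₁ β₂ z : ℝ) (m : ℝ → ℝ) (hm : ∀ z : ℝ, m z = z ^ β₁ * (S - z) ^ β₂)
    (hz : 0 < z) (hSz : 0 < S - z) :
    deriv m z = β₁ * z ^ (β₁ - 1) * (S - z) ^ β₂ - β₂ * z ^ β₁ * (S - z) ^ (β₂ - 1) := by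
  have hmfun : m = fun z => z ^ β₁ * ((S - z) ^ β₂) := funext hm
  have h1 : HasDerivAt (fun z : ℝ => z ^ β₁) (β₁ * z ^ (β₁ - 1)) z :=
    Real.hasDerivAt_rpow_const (Or.inl hz.ne')
  have h2 : HasDerivAt (fun z : ℝ => (S - z) ^ β₂) (β₂ * (S - z) ^ (β₂ - 1) * (0 - 1)) z :=
    (Real.hasDerivAt_rpow_const (p := β₂) (Or.inl hSz.ne')).comp z
      ((hasDerivAt_const z S).sub (hasDerivAt_id z))
  have h3 := (h1.mul h2).deriv
  rw [show ((fun z : ℝ => z ^ β₁) * fun z : ℝ => (S - z) ^ β₂) = m from hmfun.symm] at h3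
  rw [h3]; ring

/-- Auxiliary: integrability of `x ^ c` on `Ioc 0 b`. -/
lemma MS_int_left (b c : ℝ) (hb : 0 ≤ b) (hc : -1 < c) :
    IntegrableOn (fun r : ℝ => r ^ c) (Ioc 0 b) := by
  have := intervalIntegrable_rpow' (a := 0) (b := b) hc
  rwa [intervalIntegrable_iff_integrableOn_Ioc_of_le hb] at this

/-- Auxiliary: integrability of `(S - x) ^ c` on `Ioc b S`. -/
lemma MS_int_right (S b c : ℝ) (hb : b ≤ S) (hc : -1 < c) :
    IntegrableOn (fun r : ℝ => (S - r) ^ c) (Ioc b S) := by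
  have := (intervalIntegrable_rpow' (a := 0) (b := S - b) hc).comp_sub_left S
  simp only [sub_sub_cancel, sub_zero] at this
  replace this := this.symm
  rwa [intervalIntegrable_iff_integrableOn_Ioc_of_le hb] at this

lemma MS_integral_left (z c : ℝ) (hz : 0 ≤ z) (hc : -1 < c) :
    ∫ r in Ioo (0:ℝ) z, r ^ c = z ^ (c + 1) / (c + 1) := by
  rw [← integral_Ioc_eq_integral_Ioo, ← intervalIntegral.integral_of_le hz,
    integral_rpow (Or.inl hc), Real.zero_rpow (by linarith), sub_zero]

lemma MS_integral_right (S z c : ℝ) (hz : z ≤ S) (hc : -1 < c) :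
    ∫ r in Ioo z S, (S - r) ^ c = (S - z) ^ (c + 1) / (c + 1) := by
  rw [← integral_Ioc_eq_integral_Ioo, ← intervalIntegral.integral_of_le hz,
    intervalIntegral.integral_comp_sub_left (fun x => x ^ c) S, sub_self,
    integral_rpow (Or.inl hc), Real.zero_rpow (by linarith), sub_zero]

/-- Auxiliary: integrability of the model integrand on `Ioo 0 S`. -/
lemma MS_integrableOn_F (S : ℝ) (hS : 0 < S) (β₁ β₂ : ℝ)
    (hβ₁ : β₁ ∈ Set.Ioc (2 / 3 : ℝ) 1) (hβ₂ : β₂ ∈ Set.Ioc (2 / 3 : ℝ) 1) :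
    IntegrableOn
      (fun r : ℝ => Real.sqrt 2 * r ^ (-(β₁ / 2)) * (S - r) ^ (-(β₂ / 2))) (Ioo 0 S) := by
  set F : ℝ → ℝ := fun r => Real.sqrt 2 * r ^ (-(β₁ / 2)) * (S - r) ^ (-(β₂ / 2)) with hF
  have hc₁ : (-1 : ℝ) < -(β₁ / 2) := by have := hβ₁.2; linarith
  have hc₂ : (-1 : ℝ) < -(β₂ / 2) := by have := hβ₂.2; linarith
  have hhalf : (0:ℝ) < S / 2 := by linarith
  have hL : IntegrableOn F (Ioc 0 (S / 2)) := by
    have hdom : IntegrableOn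
        (fun r : ℝ => (Real.sqrt 2 * (S / 2) ^ (-(β₂ / 2))) * r ^ (-(β₁ / 2)))
        (Ioc 0 (S / 2)) := (MS_int_left (S / 2) _ hhalf.le hc₁).const_mul _
    refine hdom.mono' ?_ ?_
    · apply ContinuousOn.aestronglyMeasurable ?_ measurableSet_Ioc
      apply ContinuousOn.mul
      · exact continuousOn_const.mul (continuousOn_id.rpow_const fun x hx => Or.inl hx.1.ne')
      · exact (continuousOn_const.sub continuousOn_id).rpow_const
          fun x hx => Or.inl (by intro h; simp only [Pi.sub_apply, id] at h; nlinarith [hx.2])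
    · filter_upwards [ae_restrict_mem measurableSet_Ioc] with r hr
      have hr0 : (0:ℝ) < r := hr.1
      have hSr : S / 2 ≤ S - r := by linarith [hr.2]
      have h1 : (S - r) ^ (-(β₂ / 2)) ≤ (S / 2) ^ (-(β₂ / 2)) :=
        Real.rpow_le_rpow_of_nonpos hhalf hSr (by linarith [hβ₂.1])
      have hFr : 0 ≤ F r := by
        apply mul_nonneg (mul_nonneg (Real.sqrt_nonneg 2) (Real.rpow_nonneg hr0.le _))
        exact Real.rpow_nonneg (by linarith) _
      rw [Real.norm_eq_abs, abs_of_nonneg hFr]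
      calc F r = (Real.sqrt 2 * r ^ (-(β₁ / 2))) * (S - r) ^ (-(β₂ / 2)) := by rw [hF]
        _ ≤ (Real.sqrt 2 * r ^ (-(β₁ / 2))) * (S / 2) ^ (-(β₂ / 2)) := by
            apply mul_le_mul_of_nonneg_left h1
            exact mul_nonneg (Real.sqrt_nonneg 2) (Real.rpow_nonneg hr0.le _)
        _ = (Real.sqrt 2 * (S / 2) ^ (-(β₂ / 2))) * r ^ (-(β₁ / 2)) := by ring
  have hR : IntegrableOn F (Ioo (S / 2) S) := by
    have hdom : IntegrableOn
        (fun r : ℝ => (Real.sqrt 2 * (S / 2) ^ (-(β₁ / 2))) * (S - r) ^ (-(β₂ / 2)))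
        (Ioo (S / 2) S) := by
      have h0 : IntegrableOn
          (fun r : ℝ => (Real.sqrt 2 * (S / 2) ^ (-(β₁ / 2))) * (S - r) ^ (-(β₂ / 2)))
          (Ioc (S / 2) S) := (MS_int_right S (S / 2) _ (by linarith) hc₂).const_mul _
      exact h0.mono_set Ioo_subset_Ioc_self
    refine hdom.mono' ?_ ?_
    · apply ContinuousOn.aestronglyMeasurable ?_ measurableSet_Ioo
      apply ContinuousOn.mul
      · exact continuousOn_const.mul (continuousOn_id.rpow_const
          fun x hx => Or.inl (by simp only [id]; intro h; nlinarith [hx.1]))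
      · exact (continuousOn_const.sub continuousOn_id).rpow_const
          fun x hx => Or.inl (by intro h; simp only [Pi.sub_apply, id] at h; nlinarith [hx.2])
    · filter_upwards [ae_restrict_mem measurableSet_Ioo] with r hr
      have hr0 : (0:ℝ) < r := lt_trans hhalf hr.1
      have hSr : (0:ℝ) < S - r := by linarith [hr.2]
      have h1 : r ^ (-(β₁ / 2)) ≤ (S / 2) ^ (-(β₁ / 2)) :=
        Real.rpow_le_rpow_of_nonpos hhalf hr.1.le (by linarith [hβ₁.1])
      have hFr : 0 ≤ F r := by
        apply mul_nonneg (mul_nonneg (Real.sqrt_nonneg 2) (Real.rpow_nonneg hr0.le _))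
        exact Real.rpow_nonneg hSr.le _
      rw [Real.norm_eq_abs, abs_of_nonneg hFr]
      calc F r = (Real.sqrt 2 * (S - r) ^ (-(β₂ / 2))) * r ^ (-(β₁ / 2)) := by rw [hF]; ring
        _ ≤ (Real.sqrt 2 * (S - r) ^ (-(β₂ / 2))) * (S / 2) ^ (-(β₁ / 2)) := by
            apply mul_le_mul_of_nonneg_left h1
            exact mul_nonneg (Real.sqrt_nonneg 2) (Real.rpow_nonneg hSr.le _)
        _ = (Real.sqrt 2 * (S / 2) ^ (-(β₁ / 2))) * (S - r) ^ (-(β₂ / 2)) := by ring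
  have hsplit : Ioc 0 (S / 2) ∪ Ioo (S / 2) S = Ioo 0 S :=
    Ioc_union_Ioo_eq_Ioo hhalf.le (by linarith)
  rw [← hsplit]
  exact hL.union hR

/-- Let `S ∈ (0,∞)`, `β₁, β₂ ∈ (2/3, 1]` and `m(z) := z^{β₁}(S−z)^{β₂}`
on `(0,S)`. Then `f(S) := ∫₀^S √(2/m(r)) dr` is finite (the integrand is integrable on
`(0,S)`), `lim_{z→0⁺} m'(z)² f(z) = 0`, and `lim_{z→S⁻} m'(z)² (f(S) − f(z)) = 0`;
that is, `m` satisfies condition (M-S). -/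
theorem doubly_degenerate_mobility_satisfies_MS
    (S : ℝ) (hS : 0 < S)
    (β₁ β₂ : ℝ) (hβ₁ : β₁ ∈ Ioc (2 / 3 : ℝ) 1) (hβ₂ : β₂ ∈ Ioc (2 / 3 : ℝ) 1)
    (m : ℝ → ℝ) (hm : ∀ z : ℝ, m z = z ^ β₁ * (S - z) ^ β₂) :
    IntegrableOn (fun r => Real.sqrt (2 / m r)) (Ioo 0 S) ∧
    Tendsto
      (fun z : ℝ => (deriv m z) ^ 2 * ∫ r in Ioo (0 : ℝ) z, Real.sqrt (2 / m r))
      (𝓝[>] (0 : ℝ)) (𝓝 0) ∧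
    Tendsto
      (fun z : ℝ => (deriv m z) ^ 2 *
        ((∫ r in Ioo (0 : ℝ) S, Real.sqrt (2 / m r))
          - ∫ r in Ioo (0 : ℝ) z, Real.sqrt (2 / m r)))
      (𝓝[<] S) (𝓝 0) := by
  obtain ⟨hβ₁l, hβ₁r⟩ := hβ₁
  obtain ⟨hβ₂l, hβ₂r⟩ := hβ₂
  have hhalf : (0:ℝ) < S / 2 := by linarith
  have hc₁ : (-1 : ℝ) < -(β₁ / 2) := by linarith
  have hc₂ : (-1 : ℝ) < -(β₂ / 2) := by linarith
  set F : ℝ → ℝ := fun r => Real.sqrt 2 * r ^ (-(β₁ / 2)) * (S - r) ^ (-(β₂ / 2)) with hFdef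
  have hkey : ∀ r ∈ Ioo (0:ℝ) S, Real.sqrt (2 / m r) = F r := by
    intro r hr
    rw [hm]
    exact MS_sqrt_eq S β₁ β₂ r hr.1 (by linarith [hr.2])
  have hF : IntegrableOn F (Ioo 0 S) := MS_integrableOn_F S hS β₁ β₂ ⟨hβ₁l, hβ₁r⟩ ⟨hβ₂l, hβ₂r⟩
  have hint : IntegrableOn (fun r => Real.sqrt (2 / m r)) (Ioo 0 S) :=
    hF.congr_fun (fun r hr => (hkey r hr).symm) measurableSet_Ioo
  refine ⟨hint, ?_, ?_⟩
  -- LIMIT AT 0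
  · set d₁ : ℝ := -(β₁ / 2) + 1 with hd₁def
    have hd₁ : 0 < d₁ := by rw [hd₁def]; linarith
    set K₀ : ℝ := Real.sqrt 2 * (S / 2) ^ (-(β₂ / 2)) with hK₀def
    have hK₀ : 0 ≤ K₀ := mul_nonneg (Real.sqrt_nonneg 2) (Real.rpow_nonneg hhalf.le _)
    set C₀ : ℝ := β₁ * S ^ β₂ + β₂ * S * (S / 2) ^ (β₂ - 1) with hC₀def
    set ε : ℝ := (β₁ - 1) + (β₁ - 1) + d₁ with hεdef
    have hε : 0 < ε := by rw [hεdef, hd₁def]; linarith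
    set C : ℝ := C₀ ^ 2 * (K₀ / d₁) with hCdef
    have hev : Ioo (0:ℝ) (S / 2) ∈ 𝓝[>] (0:ℝ) :=
      Ioo_mem_nhdsGT_of_mem ⟨le_refl 0, hhalf⟩
    have hbound : ∀ z ∈ Ioo (0:ℝ) (S / 2),
        (deriv m z) ^ 2 * (∫ r in Ioo (0:ℝ) z, Real.sqrt (2 / m r)) ≤ C * z ^ ε := by
      intro z hz
      have hz0 : (0:ℝ) < z := hz.1
      have hzS : z < S := by linarith [hz.2]
      have hSz : (0:ℝ) < S - z := by linarith
      have hsub : Ioo (0:ℝ) z ⊆ Ioo 0 S := Ioo_subset_Ioo le_rfl hzS.le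
      -- integral bound
      have hIdom : IntegrableOn (fun r : ℝ => K₀ * r ^ (-(β₁ / 2))) (Ioo 0 z) := by
        have h0 : IntegrableOn (fun r : ℝ => K₀ * r ^ (-(β₁ / 2))) (Ioc 0 z) :=
          (MS_int_left z _ hz0.le hc₁).const_mul _
        exact h0.mono_set Ioo_subset_Ioc_self
      have hIle : (∫ r in Ioo (0:ℝ) z, Real.sqrt (2 / m r))
          ≤ K₀ * (z ^ d₁ / d₁) := by
        rw [setIntegral_congr_fun measurableSet_Ioo (fun r hr => hkey r (hsub hr))]
        calc (∫ r in Ioo (0:ℝ) z, F r)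
            ≤ ∫ r in Ioo (0:ℝ) z, K₀ * r ^ (-(β₁ / 2)) := by
              apply setIntegral_mono_on (hF.mono_set hsub) hIdom measurableSet_Ioo
              intro r hr
              have hr0 : (0:ℝ) < r := hr.1
              have h1 : (S - r) ^ (-(β₂ / 2)) ≤ (S / 2) ^ (-(β₂ / 2)) :=
                Real.rpow_le_rpow_of_nonpos hhalf (by linarith [hr.2, hz.2]) (by linarith)
              calc F r = (Real.sqrt 2 * r ^ (-(β₁ / 2))) * (S - r) ^ (-(β₂ / 2)) := by
                    rw [hFdef]
                _ ≤ (Real.sqrt 2 * r ^ (-(β₁ / 2))) * (S / 2) ^ (-(β₂ / 2)) :=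
                    mul_le_mul_of_nonneg_left h1
                      (mul_nonneg (Real.sqrt_nonneg 2) (Real.rpow_nonneg hr0.le _))
                _ = K₀ * r ^ (-(β₁ / 2)) := by rw [hK₀def]; ring
          _ = K₀ * (z ^ d₁ / d₁) := by
              rw [MeasureTheory.integral_const_mul, MS_integral_left z _ hz0.le hc₁]
      have hInn : 0 ≤ ∫ r in Ioo (0:ℝ) z, Real.sqrt (2 / m r) :=
        setIntegral_nonneg measurableSet_Ioo fun r _ => Real.sqrt_nonneg _
      -- derivative bound
      have hd := MS_deriv S β₁ β₂ z m hm hz0 hSz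
      have hzpow : (0:ℝ) ≤ z ^ (β₁ - 1) := Real.rpow_nonneg hz0.le _
      have habs : |deriv m z| ≤ C₀ * z ^ (β₁ - 1) := by
        rw [hd]
        have hA : β₁ * z ^ (β₁ - 1) * (S - z) ^ β₂ ≤ β₁ * z ^ (β₁ - 1) * S ^ β₂ :=
          mul_le_mul_of_nonneg_left
            (Real.rpow_le_rpow hSz.le (by linarith) (by linarith))
            (mul_nonneg (by linarith) hzpow)
        have hzsplit : z ^ β₁ = z ^ (β₁ - 1) * z := by
          have h := Real.rpow_add hz0 (β₁ - 1) 1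
          simp only [Real.rpow_one] at h
          rw [show β₁ - 1 + 1 = β₁ by ring] at h
          exact h
        have hB : β₂ * z ^ β₁ * (S - z) ^ (β₂ - 1)
            ≤ β₂ * (z ^ (β₁ - 1) * S) * (S / 2) ^ (β₂ - 1) := by
          rw [hzsplit]
          apply mul_le_mul
          · apply mul_le_mul_of_nonneg_left _ (by linarith : (0:ℝ) ≤ β₂)
            exact mul_le_mul_of_nonneg_left hzS.le hzpow
          · exact Real.rpow_le_rpow_of_nonpos hhalf (by linarith [hz.2]) (by linarith)
          · exact Real.rpow_nonneg hSz.le _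
          · exact mul_nonneg (by linarith) (mul_nonneg hzpow hS.le)
        have hAnn : (0:ℝ) ≤ β₁ * z ^ (β₁ - 1) * (S - z) ^ β₂ :=
          mul_nonneg (mul_nonneg (by linarith) hzpow) (Real.rpow_nonneg hSz.le _)
        have hBnn : (0:ℝ) ≤ β₂ * z ^ β₁ * (S - z) ^ (β₂ - 1) :=
          mul_nonneg (mul_nonneg (by linarith) (Real.rpow_nonneg hz0.le _))
            (Real.rpow_nonneg hSz.le _)
        calc |β₁ * z ^ (β₁ - 1) * (S - z) ^ β₂ - β₂ * z ^ β₁ * (S - z) ^ (β₂ - 1)|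
            ≤ |β₁ * z ^ (β₁ - 1) * (S - z) ^ β₂| + |β₂ * z ^ β₁ * (S - z) ^ (β₂ - 1)| :=
              abs_sub _ _
          _ = β₁ * z ^ (β₁ - 1) * (S - z) ^ β₂ + β₂ * z ^ β₁ * (S - z) ^ (β₂ - 1) := by
              rw [abs_of_nonneg hAnn, abs_of_nonneg hBnn]
          _ ≤ β₁ * z ^ (β₁ - 1) * S ^ β₂ + β₂ * (z ^ (β₁ - 1) * S) * (S / 2) ^ (β₂ - 1) :=
              add_le_add hA hB
          _ = C₀ * z ^ (β₁ - 1) := by rw [hC₀def]; ring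
      have hsq : (deriv m z) ^ 2 ≤ (C₀ * z ^ (β₁ - 1)) ^ 2 := by
        rw [← sq_abs]
        exact pow_le_pow_left₀ (abs_nonneg _) habs 2
      calc (deriv m z) ^ 2 * (∫ r in Ioo (0:ℝ) z, Real.sqrt (2 / m r))
          ≤ (C₀ * z ^ (β₁ - 1)) ^ 2 * (K₀ * (z ^ d₁ / d₁)) :=
            mul_le_mul hsq hIle hInn (sq_nonneg _)
        _ = (C₀ ^ 2 * (K₀ / d₁)) * (z ^ (β₁ - 1) * z ^ (β₁ - 1) * z ^ d₁) := by ring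
        _ = C * z ^ ε := by
            rw [hCdef, ← Real.rpow_add hz0, ← Real.rpow_add hz0, hεdef]
    have htends : Tendsto (fun z : ℝ => C * z ^ ε) (𝓝[>] (0:ℝ)) (𝓝 0) := by
      have h := (Real.continuousAt_rpow_const 0 ε (Or.inr hε.le)).tendsto
      rw [Real.zero_rpow hε.ne'] at h
      have h2 := h.const_mul C
      rw [mul_zero] at h2
      exact h2.mono_left nhdsWithin_le_nhds
    apply squeeze_zero' ?_ ?_ htends
    · filter_upwards [hev] with z _
      exact mul_nonneg (sq_nonneg _)
        (setIntegral_nonneg measurableSet_Ioo fun r _ => Real.sqrt_nonneg _)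
    · filter_upwards [hev] with z hz
      exact hbound z hz
  -- LIMIT AT S
  · set d₂ : ℝ := -(β₂ / 2) + 1 with hd₂def
    have hd₂ : 0 < d₂ := by rw [hd₂def]; linarith
    set K₁ : ℝ := Real.sqrt 2 * (S / 2) ^ (-(β₁ / 2)) with hK₁def
    have hK₁ : 0 ≤ K₁ := mul_nonneg (Real.sqrt_nonneg 2) (Real.rpow_nonneg hhalf.le _)
    set C₁ : ℝ := β₁ * (S / 2) ^ (β₁ - 1) * S + β₂ * S ^ β₁ with hC₁def
    set ε : ℝ := (β₂ - 1) + (β₂ - 1) + d₂ with hεdef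
    have hε : 0 < ε := by rw [hεdef, hd₂def]; linarith
    set C : ℝ := C₁ ^ 2 * (K₁ / d₂) with hCdef
    have hev : Ioo (S / 2) S ∈ 𝓝[<] S :=
      Ioo_mem_nhdsLT_of_mem ⟨by linarith, le_refl S⟩
    have hsplitI : ∀ z ∈ Ioo (0:ℝ) S,
        (∫ r in Ioo (0:ℝ) S, Real.sqrt (2 / m r))
          - (∫ r in Ioo (0:ℝ) z, Real.sqrt (2 / m r))
          = ∫ r in Ioo z S, Real.sqrt (2 / m r) := by
      intro z hz
      have hdisj : Disjoint (Ioc (0:ℝ) z) (Ioo z S) := by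
        rw [Set.disjoint_left]
        rintro x ⟨_, hx2⟩ ⟨hx3, _⟩
        exact absurd hx3 (not_lt.2 hx2)
      have hu : Ioc (0:ℝ) z ∪ Ioo z S = Ioo 0 S := Ioc_union_Ioo_eq_Ioo hz.1.le hz.2
      rw [← hu, setIntegral_union hdisj measurableSet_Ioo
        (hint.mono_set (hu ▸ subset_union_left))
        (hint.mono_set (hu ▸ subset_union_right)),
        integral_Ioc_eq_integral_Ioo]
      ring
    have hbound : ∀ z ∈ Ioo (S / 2) S,
        (deriv m z) ^ 2 *
          ((∫ r in Ioo (0:ℝ) S, Real.sqrt (2 / m r))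
            - ∫ r in Ioo (0:ℝ) z, Real.sqrt (2 / m r)) ≤ C * (S - z) ^ ε := by
      intro z hz
      have hz0 : (0:ℝ) < z := lt_trans hhalf hz.1
      have hzS : z < S := hz.2
      have hSz : (0:ℝ) < S - z := by linarith
      have hsub : Ioo z S ⊆ Ioo 0 S := Ioo_subset_Ioo hz0.le le_rfl
      rw [hsplitI z ⟨hz0, hzS⟩]
      -- integral bound
      have hIdom : IntegrableOn (fun r : ℝ => K₁ * (S - r) ^ (-(β₂ / 2))) (Ioo z S) := by
        have h0 : IntegrableOn (fun r : ℝ => K₁ * (S - r) ^ (-(β₂ / 2))) (Ioc z S) :=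
          (MS_int_right S z _ hzS.le hc₂).const_mul _
        exact h0.mono_set Ioo_subset_Ioc_self
      have hIle : (∫ r in Ioo z S, Real.sqrt (2 / m r))
          ≤ K₁ * ((S - z) ^ d₂ / d₂) := by
        rw [setIntegral_congr_fun measurableSet_Ioo (fun r hr => hkey r (hsub hr))]
        calc (∫ r in Ioo z S, F r)
            ≤ ∫ r in Ioo z S, K₁ * (S - r) ^ (-(β₂ / 2)) := by
              apply setIntegral_mono_on (hF.mono_set hsub) hIdom measurableSet_Ioo
              intro r hr
              have hr0 : (0:ℝ) < r := lt_trans hz0 hr.1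
              have hSr : (0:ℝ) < S - r := by linarith [hr.2]
              have h1 : r ^ (-(β₁ / 2)) ≤ (S / 2) ^ (-(β₁ / 2)) :=
                Real.rpow_le_rpow_of_nonpos hhalf (by linarith [hz.1, hr.1]) (by linarith)
              calc F r = (Real.sqrt 2 * (S - r) ^ (-(β₂ / 2))) * r ^ (-(β₁ / 2)) := by
                    rw [hFdef]; ring
                _ ≤ (Real.sqrt 2 * (S - r) ^ (-(β₂ / 2))) * (S / 2) ^ (-(β₁ / 2)) :=
                    mul_le_mul_of_nonneg_left h1
                      (mul_nonneg (Real.sqrt_nonneg 2) (Real.rpow_nonneg hSr.le _))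
                _ = K₁ * (S - r) ^ (-(β₂ / 2)) := by rw [hK₁def]; ring
          _ = K₁ * ((S - z) ^ d₂ / d₂) := by
              rw [MeasureTheory.integral_const_mul, MS_integral_right S z _ hzS.le hc₂]
      have hInn : 0 ≤ ∫ r in Ioo z S, Real.sqrt (2 / m r) :=
        setIntegral_nonneg measurableSet_Ioo fun r _ => Real.sqrt_nonneg _
      -- derivative bound
      have hd := MS_deriv S β₁ β₂ z m hm hz0 hSz
      have hSzpow : (0:ℝ) ≤ (S - z) ^ (β₂ - 1) := Real.rpow_nonneg hSz.le _
      have habs : |deriv m z| ≤ C₁ * (S - z) ^ (β₂ - 1) := by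
        rw [hd]
        have hSzsplit : (S - z) ^ β₂ = (S - z) ^ (β₂ - 1) * (S - z) := by
          have h := Real.rpow_add hSz (β₂ - 1) 1
          simp only [Real.rpow_one] at h
          rw [show β₂ - 1 + 1 = β₂ by ring] at h
          exact h
        have hA : β₁ * z ^ (β₁ - 1) * (S - z) ^ β₂
            ≤ β₁ * (S / 2) ^ (β₁ - 1) * (S * (S - z) ^ (β₂ - 1)) := by
          rw [hSzsplit]
          have h1 : z ^ (β₁ - 1) ≤ (S / 2) ^ (β₁ - 1) :=
            Real.rpow_le_rpow_of_nonpos hhalf hz.1.le (by linarith)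
          have h2 : (S - z) ^ (β₂ - 1) * (S - z) ≤ S * (S - z) ^ (β₂ - 1) := by
            rw [mul_comm ((S - z) ^ (β₂ - 1)) (S - z)]
            exact mul_le_mul_of_nonneg_right (by linarith) hSzpow
          calc β₁ * z ^ (β₁ - 1) * ((S - z) ^ (β₂ - 1) * (S - z))
              ≤ β₁ * (S / 2) ^ (β₁ - 1) * ((S - z) ^ (β₂ - 1) * (S - z)) := by
                apply mul_le_mul_of_nonneg_right _
                  (mul_nonneg hSzpow hSz.le)
                exact mul_le_mul_of_nonneg_left h1 (by linarith)
            _ ≤ β₁ * (S / 2) ^ (β₁ - 1) * (S * (S - z) ^ (β₂ - 1)) := by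
                apply mul_le_mul_of_nonneg_left h2
                exact mul_nonneg (by linarith) (Real.rpow_nonneg hhalf.le _)
        have hB : β₂ * z ^ β₁ * (S - z) ^ (β₂ - 1)
            ≤ β₂ * S ^ β₁ * (S - z) ^ (β₂ - 1) := by
          apply mul_le_mul_of_nonneg_right _ hSzpow
          exact mul_le_mul_of_nonneg_left
            (Real.rpow_le_rpow hz0.le hzS.le (by linarith)) (by linarith)
        have hAnn : (0:ℝ) ≤ β₁ * z ^ (β₁ - 1) * (S - z) ^ β₂ :=
          mul_nonneg (mul_nonneg (by linarith) (Real.rpow_nonneg hz0.le _))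
            (Real.rpow_nonneg hSz.le _)
        have hBnn : (0:ℝ) ≤ β₂ * z ^ β₁ * (S - z) ^ (β₂ - 1) :=
          mul_nonneg (mul_nonneg (by linarith) (Real.rpow_nonneg hz0.le _)) hSzpow
        calc |β₁ * z ^ (β₁ - 1) * (S - z) ^ β₂ - β₂ * z ^ β₁ * (S - z) ^ (β₂ - 1)|
            ≤ |β₁ * z ^ (β₁ - 1) * (S - z) ^ β₂| + |β₂ * z ^ β₁ * (S - z) ^ (β₂ - 1)| :=
              abs_sub _ _
          _ = β₁ * z ^ (β₁ - 1) * (S - z) ^ β₂ + β₂ * z ^ β₁ * (S - z) ^ (β₂ - 1) := by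
              rw [abs_of_nonneg hAnn, abs_of_nonneg hBnn]
          _ ≤ β₁ * (S / 2) ^ (β₁ - 1) * (S * (S - z) ^ (β₂ - 1))
              + β₂ * S ^ β₁ * (S - z) ^ (β₂ - 1) := add_le_add hA hB
          _ = C₁ * (S - z) ^ (β₂ - 1) := by rw [hC₁def]; ring
      have hsq : (deriv m z) ^ 2 ≤ (C₁ * (S - z) ^ (β₂ - 1)) ^ 2 := by
        rw [← sq_abs]
        exact pow_le_pow_left₀ (abs_nonneg _) habs 2
      calc (deriv m z) ^ 2 * (∫ r in Ioo z S, Real.sqrt (2 / m r))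
          ≤ (C₁ * (S - z) ^ (β₂ - 1)) ^ 2 * (K₁ * ((S - z) ^ d₂ / d₂)) :=
            mul_le_mul hsq hIle hInn (sq_nonneg _)
        _ = (C₁ ^ 2 * (K₁ / d₂)) * ((S - z) ^ (β₂ - 1) * (S - z) ^ (β₂ - 1) * (S - z) ^ d₂) := by
            ring
        _ = C * (S - z) ^ ε := by
            rw [hCdef, ← Real.rpow_add hSz, ← Real.rpow_add hSz, hεdef]
    have hsubtend : Tendsto (fun z : ℝ => S - z) (𝓝[<] S) (𝓝[>] (0:ℝ)) := by
      apply tendsto_nhdsWithin_of_tendsto_nhds_of_eventually_within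
      · have h : Tendsto (fun z : ℝ => S - z) (𝓝 S) (𝓝 (S - S)) :=
          (continuous_const.sub continuous_id).tendsto S
        rw [sub_self] at h
        exact h.mono_left nhdsWithin_le_nhds
      · filter_upwards [self_mem_nhdsWithin] with z hz
        exact sub_pos.2 (mem_Iio.1 hz)
    have htends : Tendsto (fun z : ℝ => C * (S - z) ^ ε) (𝓝[<] S) (𝓝 0) := by
      have h := (Real.continuousAt_rpow_const 0 ε (Or.inr hε.le)).tendsto
      rw [Real.zero_rpow hε.ne'] at h
      have h2 := h.const_mul C
      rw [mul_zero] at h2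
      exact (h2.mono_left nhdsWithin_le_nhds).comp hsubtend
    apply squeeze_zero' ?_ ?_ htends
    · filter_upwards [hev] with z hz
      rw [hsplitI z ⟨lt_trans hhalf hz.1, hz.2⟩]
      exact mul_nonneg (sq_nonneg _)
        (setIntegral_nonneg measurableSet_Ioo fun r _ => Real.sqrt_nonneg _)
    · filter_upwards [hev] with z hz
      exact hbound z hz
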